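/- Let f ∈ ℂ[x,y]_d and let r satisfy 2r ≤ d+1. Suppose there exist λ_1, …, λ_r ∈ ℂ∖{0} and pairwise distinct β_1, …, β_r ∈ ℂ such that f(x,y) = Σ_{k=1}^{r} λ_k (x+β_k y)^d. Then WR(f) = r, and the minimal decomposition of f is unique: whenever f = Σ_{ℓ=1}^{s} μ_ℓ M_ℓ^d with s ≤ r, μ_1, …, μ_s ∈ ℂ∖{0}, and pairwise non-proportional linear forms M_1, …, M_s ∈ ℂ[x,y]_1, one has s = r and there is a permutation σ of {1,…,r} such that μ_ℓ M_ℓ^d = λ_{σ(ℓ)} (x+β_{σ(ℓ)} y)^d for all ℓ. -/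

import Mathlib

open MvPolynomial

/-- The linear form `x + β y` in `ℂ[x,y]`. -/
noncomputable def linForm (β : ℂ) : MvPolynomial (Fin 2) ℂ := X 0 + C β * X 1



lemma linForm_homog (β : ℂ) : (linForm β).IsHomogeneous 1 :=
  (isHomogeneous_X _ _).add ((isHomogeneous_X ℂ (1 : Fin 2)).C_mul β)

lemma degree_one_fin2 {m : Fin 2 →₀ ℕ} (hm : m.degree = 1) :
    m = Finsupp.single 0 1 ∨ m = Finsupp.single 1 1 := by
  have hdeg : m.degree = m 0 + m 1 := by
    rw [Finsupp.degree_apply, Finset.sum_subset (Finset.subset_univ _), Fin.sum_univ_two]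
    intro i _ hi
    simpa using hi
  rw [hdeg] at hm
  rcases Nat.add_eq_one_iff.mp hm with ⟨h0, h1⟩ | ⟨h0, h1⟩
  · right
    ext i
    fin_cases i <;> simp [h0, h1, Finsupp.single_apply]
  · left
    ext i
    fin_cases i <;> simp [h0, h1, Finsupp.single_apply]

lemma homog_one_decomp {p : MvPolynomial (Fin 2) ℂ} (hp : p.IsHomogeneous 1) :
    p = C (p.coeff (Finsupp.single 0 1)) * X 0 + C (p.coeff (Finsupp.single 1 1)) * X 1 := by
  ext m
  rw [coeff_add, coeff_C_mul, coeff_C_mul, coeff_X', coeff_X']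
  by_cases h0 : m = Finsupp.single 0 1
  · subst h0
    have : ¬ (Finsupp.single (1 : Fin 2) 1 = Finsupp.single 0 1) := by
      intro h
      have := DFunLike.congr_fun h (0 : Fin 2)
      simp [Finsupp.single_apply] at this
    simp [this]
  · by_cases h1 : m = Finsupp.single 1 1
    · subst h1
      have : ¬ (Finsupp.single (0 : Fin 2) 1 = Finsupp.single 1 1) := by
        intro h
        have := DFunLike.congr_fun h (0 : Fin 2)
        simp [Finsupp.single_apply] at this
      simp [this]
    · have hz : p.coeff m = 0 := by
        refine hp.coeff_eq_zero ?_
        intro h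
        rcases degree_one_fin2 h with h | h
        exacts [h0 h, h1 h]
      have e0 : ¬ (Finsupp.single (0 : Fin 2) 1 = m) := fun h => h0 h.symm
      have e1 : ¬ (Finsupp.single (1 : Fin 2) 1 = m) := fun h => h1 h.symm
      simp [hz, e0, e1]


open Finset Polynomial in
lemma grouped_vand {ι : Type*} [Fintype ι] (n : ℕ) (ν c : ι → ℂ)
    (hn : (Finset.univ.image ν).card ≤ n)
    (h : ∀ j < n, ∑ i, c i * ν i ^ j = 0) (t : ℂ) :
    ∑ i ∈ Finset.univ.filter (fun i => ν i = t), c i = 0 := by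
  classical
  by_cases ht : t ∈ Finset.univ.image ν
  · set T := (Finset.univ.image ν) with hT
    set e : ℂ → ℂ := fun u => ∑ i ∈ Finset.univ.filter (fun i => ν i = u), c i with he
    have hmom : ∀ j < n, ∑ u ∈ T, e u * u ^ j = 0 := by
      intro j hj
      rw [← h j hj,
        ← Finset.sum_fiberwise_of_maps_to (fun i _ => Finset.mem_image_of_mem ν (Finset.mem_univ i))
          (fun i => c i * ν i ^ j)]
      refine Finset.sum_congr rfl fun u hu => ?_
      rw [he, Finset.sum_mul]
      exact Finset.sum_congr rfl fun i hi => by rw [(Finset.mem_filter.mp hi).2]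
    set P := Lagrange.basis T id t with hP
    have hinj : Set.InjOn (id : ℂ → ℂ) T := Function.injective_id.injOn
    have hcard : 1 ≤ T.card := Finset.card_pos.mpr ⟨t, ht⟩
    have hdeg : P.natDegree < n := by
      rw [hP, Lagrange.natDegree_basis hinj ht]
      omega
    have key : e t = ∑ u ∈ T, e u * P.eval u := by
      rw [Finset.sum_eq_single t]
      · rw [show P.eval t = P.eval (id t) from rfl, hP, Lagrange.eval_basis_self hinj ht, mul_one]
      · intro u hu hut
        rw [show P.eval u = P.eval (id u) from rfl, hP,
          Lagrange.eval_basis_of_ne (Ne.symm hut) hu, mul_zero]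
      · exact fun h => absurd ht h
    have : e t = 0 := by
      rw [key]
      calc ∑ u ∈ T, e u * P.eval u
          = ∑ u ∈ T, e u * ∑ j ∈ Finset.range n, P.coeff j * u ^ j := by
            exact Finset.sum_congr rfl fun u _ => by rw [Polynomial.eval_eq_sum_range' hdeg]
        _ = ∑ j ∈ Finset.range n, ∑ u ∈ T, P.coeff j * (e u * u ^ j) := by
            simp_rw [Finset.mul_sum]
            rw [Finset.sum_comm]
            exact Finset.sum_congr rfl fun j _ =>
              Finset.sum_congr rfl fun u _ => by ring
        _ = 0 := by
            refine Finset.sum_eq_zero fun j hj => ?_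
            rw [← Finset.mul_sum, hmom j (Finset.mem_range.mp hj), mul_zero]
    exact this
  · rw [Finset.filter_eq_empty_iff.mpr, Finset.sum_empty]
    intro i _ hit
    exact ht (hit ▸ Finset.mem_image_of_mem ν (Finset.mem_univ i))

open Finset Polynomial in
lemma core {d r s : ℕ} (hd : 1 ≤ d) (hrs : r + s ≤ d + 1)
    (lam : Fin r → ℂ) (hlam : ∀ k, lam k ≠ 0)
    (β : Fin r → ℂ) (hβ : Function.Injective β) (i0 : Fin r)
    (μ : Fin s → ℂ) (a b : Fin s → ℂ)
    (heq : ∑ k, MvPolynomial.C (lam k) * (linForm (β k)) ^ d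
         = ∑ ℓ, MvPolynomial.C (μ ℓ) *
             (MvPolynomial.C (a ℓ) * MvPolynomial.X 0 + MvPolynomial.C (b ℓ) * MvPolynomial.X 1) ^ d) :
    ∀ k : Fin r,
      (Finset.univ.filter (fun ℓ => a ℓ ≠ 0 ∧ b ℓ / a ℓ = β k)).Nonempty ∧
      (∑ ℓ ∈ Finset.univ.filter (fun ℓ => a ℓ ≠ 0 ∧ b ℓ / a ℓ = β k), μ ℓ * a ℓ ^ d) = lam k := by
  classical
  have hpoly : ∑ k, Polynomial.C (lam k) * (Polynomial.X + Polynomial.C (β k)) ^ d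
      = ∑ ℓ, Polynomial.C (μ ℓ) * (Polynomial.C (a ℓ) * Polynomial.X + Polynomial.C (b ℓ)) ^ d := by
    have h := congrArg (MvPolynomial.aeval ![Polynomial.X, (1 : ℂ[X])]) heq
    simpa [linForm, MvPolynomial.aeval_C, algebraMap_eq, map_sum] using h
  set ν : Fin s → ℂ := fun ℓ => if a ℓ = 0 then β i0 else b ℓ / a ℓ with hν
  set node : Fin r ⊕ Fin s → ℂ := Sum.elim β ν with hnode
  set coef : Fin r ⊕ Fin s → ℂ :=
    Sum.elim lam (fun ℓ => if a ℓ = 0 then 0 else -(μ ℓ * a ℓ ^ d)) with hcoef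
  set n : ℕ := (Finset.univ.image node).card with hn
  -- cardinality bounds
  have himg : Finset.univ.image node ⊆
      (Finset.univ.image β) ∪ ((Finset.univ.filter (fun ℓ => a ℓ ≠ 0)).image (fun ℓ => b ℓ / a ℓ)) := by
    intro t ht
    simp only [Finset.mem_image, Finset.mem_univ, true_and] at ht
    obtain ⟨i, rfl⟩ := ht
    cases i with
    | inl k =>
      exact Finset.mem_union_left _ (Finset.mem_image_of_mem β (Finset.mem_univ k))
    | inr ℓ =>
      by_cases ha : a ℓ = 0
      · refine Finset.mem_union_left _ ?_
        have : node (Sum.inr ℓ) = β i0 := by simp [hnode, hν, ha]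
        rw [this]
        exact Finset.mem_image_of_mem β (Finset.mem_univ i0)
      · refine Finset.mem_union_right _ ?_
        have : node (Sum.inr ℓ) = b ℓ / a ℓ := by simp [hnode, hν, ha]
        rw [this]
        exact Finset.mem_image_of_mem _ (Finset.mem_filter.mpr ⟨Finset.mem_univ ℓ, ha⟩)
  have hcard1 : n ≤ r + (Finset.univ.filter (fun ℓ => a ℓ ≠ 0)).card := by
    refine (Finset.card_le_card himg).trans ((Finset.card_union_le _ _).trans ?_)
    refine add_le_add ((Finset.card_image_le).trans (by simp)) (Finset.card_image_le)
  have hn1 : n ≤ d + 1 := by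
    have := (Finset.card_filter_le Finset.univ (fun ℓ => a ℓ ≠ 0))
    simp only [Finset.card_univ, Fintype.card_fin] at this
    omega
  have hnd : (∃ ℓ, a ℓ = 0) → n ≤ d := by
    rintro ⟨ℓ0, hℓ0⟩
    have hlt : (Finset.univ.filter (fun ℓ => a ℓ ≠ 0)).card < s := by
      have hsub : (Finset.univ.filter (fun ℓ => a ℓ ≠ 0)) ⊂ Finset.univ :=
        (Finset.ssubset_iff_of_subset (Finset.subset_univ _)).mpr
          ⟨ℓ0, Finset.mem_univ _, by simp [hℓ0]⟩
      have := Finset.card_lt_card hsub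
      simpa using this
    omega
  -- the moments vanish
  have hmom : ∀ j < n, ∑ i, coef i * node i ^ j = 0 := by
    intro j hj
    have hjd : j ≤ d := by omega
    have hch : ((d.choose (d - j)) : ℂ) ≠ 0 :=
      Nat.cast_ne_zero.mpr (Nat.choose_pos (Nat.sub_le d j)).ne'
    have hcoeff := congrArg (fun p => Polynomial.coeff p (d - j)) hpoly
    simp only [Polynomial.finset_sum_coeff] at hcoeff
    have hL : ∀ k, (Polynomial.C (lam k) * (Polynomial.X + Polynomial.C (β k)) ^ d).coeff (d - j)
        = lam k * β k ^ j * ((d.choose (d - j)) : ℂ) := by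
      intro k
      rw [Polynomial.coeff_C_mul, Polynomial.coeff_X_add_C_pow, Nat.sub_sub_self hjd]
      ring
    have hR : ∀ ℓ, (Polynomial.C (μ ℓ) * (Polynomial.C (a ℓ) * Polynomial.X + Polynomial.C (b ℓ)) ^ d).coeff (d - j)
        = (if a ℓ = 0 then 0 else μ ℓ * a ℓ ^ d * ν ℓ ^ j) * ((d.choose (d - j)) : ℂ) := by
      intro ℓ
      by_cases ha : a ℓ = 0
      · have hjlt : j < d := lt_of_lt_of_le hj (hnd ⟨ℓ, ha⟩)
        rw [if_pos ha, zero_mul, ha]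
        simp only [map_zero, zero_mul, zero_add, ← Polynomial.C_pow, ← map_mul,
          Polynomial.coeff_C_mul, Polynomial.coeff_C]
        rw [if_neg (show ¬ d - j = 0 by omega)]
      · have hfac : Polynomial.C (a ℓ) * Polynomial.X + Polynomial.C (b ℓ) = Polynomial.C (a ℓ) * (Polynomial.X + Polynomial.C (b ℓ / a ℓ)) := by
          rw [mul_add, ← Polynomial.C_mul, mul_div_cancel₀ _ ha]
        rw [if_neg ha, hfac, mul_pow, ← Polynomial.C_pow, ← mul_assoc, ← map_mul,
          Polynomial.coeff_C_mul, Polynomial.coeff_X_add_C_pow, Nat.sub_sub_self hjd]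
        have hνℓ : ν ℓ = b ℓ / a ℓ := by simp [hν, ha]
        rw [hνℓ]
        ring
    rw [Finset.sum_congr rfl (fun k _ => hL k), Finset.sum_congr rfl (fun ℓ _ => hR ℓ)] at hcoeff
    have hkey : (∑ i, coef i * node i ^ j) * ((d.choose (d - j)) : ℂ)
        = (∑ k, lam k * β k ^ j * ((d.choose (d - j)) : ℂ))
          - ∑ ℓ, (if a ℓ = 0 then 0 else μ ℓ * a ℓ ^ d * ν ℓ ^ j) * ((d.choose (d - j)) : ℂ) := by
      rw [Finset.sum_mul, Fintype.sum_sum_type]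
      rw [sub_eq_add_neg, ← Finset.sum_neg_distrib]
      refine congrArg₂ (fun x y => x + y) ?_ ?_
      · exact Finset.sum_congr rfl fun k _ => by simp only [hcoef, hnode, Sum.elim_inl]
      · refine Finset.sum_congr rfl fun ℓ _ => ?_
        simp only [hcoef, hnode, Sum.elim_inr]
        by_cases ha : a ℓ = 0
        · simp [ha]
        · simp only [if_neg ha]
          ring
    rw [hcoeff, sub_self] at hkey
    exact (mul_eq_zero.mp hkey).resolve_right hch
  -- fiberwise sums vanish
  intro k
  have hfib := grouped_vand n node coef le_rfl hmom (β k)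
  rw [Finset.sum_filter, Fintype.sum_sum_type] at hfib
  have h1 : (∑ k' : Fin r, if node (Sum.inl k') = β k then coef (Sum.inl k') else 0) = lam k := by
    rw [Finset.sum_eq_single k]
    · simp [hnode, hcoef]
    · intro k' _ hk'
      rw [if_neg]
      simp only [hnode, Sum.elim_inl]
      exact fun h => hk' (hβ h)
    · exact fun h => absurd (Finset.mem_univ k) h
  have h2 : (∑ ℓ : Fin s, if node (Sum.inr ℓ) = β k then coef (Sum.inr ℓ) else 0)
      = -∑ ℓ ∈ Finset.univ.filter (fun ℓ => a ℓ ≠ 0 ∧ b ℓ / a ℓ = β k), μ ℓ * a ℓ ^ d := by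
    rw [Finset.sum_filter, ← Finset.sum_neg_distrib]
    refine Finset.sum_congr rfl fun ℓ _ => ?_
    by_cases ha : a ℓ = 0
    · simp [hnode, hcoef, hν, ha]
    · by_cases hb : b ℓ / a ℓ = β k
      · simp [hnode, hcoef, hν, ha, hb]
      · simp [hnode, hcoef, hν, ha, hb]
  rw [h1, h2] at hfib
  have hsum : (∑ ℓ ∈ Finset.univ.filter (fun ℓ => a ℓ ≠ 0 ∧ b ℓ / a ℓ = β k), μ ℓ * a ℓ ^ d)
      = lam k := by linear_combination -hfib
  refine ⟨?_, hsum⟩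
  by_contra hne
  rw [Finset.not_nonempty_iff_eq_empty] at hne
  rw [hne, Finset.sum_empty] at hsum
  exact hlam k hsum.symm

open Finset in
lemma core2 {d r s : ℕ} (hd : 1 ≤ d) (hrs : r + s ≤ d + 1) (i0 : Fin r)
    (lam : Fin r → ℂ) (hlam : ∀ k, lam k ≠ 0)
    (β : Fin r → ℂ) (hβ : Function.Injective β)
    (μ : Fin s → ℂ) (M : Fin s → MvPolynomial (Fin 2) ℂ)
    (hM : ∀ ℓ, (M ℓ).IsHomogeneous 1)
    (heq : ∑ k, C (lam k) * (linForm (β k)) ^ d = ∑ ℓ, C (μ ℓ) * (M ℓ) ^ d) :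
    ∃ a b : Fin s → ℂ,
      (∀ ℓ, M ℓ = C (a ℓ) * X 0 + C (b ℓ) * X 1) ∧
      ∃ τ : Fin r → Fin s, Function.Injective τ ∧ ∀ k,
        (a (τ k) ≠ 0 ∧ b (τ k) / a (τ k) = β k) ∧
        (∑ ℓ ∈ Finset.univ.filter (fun ℓ => a ℓ ≠ 0 ∧ b ℓ / a ℓ = β k), μ ℓ * a ℓ ^ d)
          = lam k := by
  classical
  set a : Fin s → ℂ := fun ℓ => (M ℓ).coeff (Finsupp.single 0 1) with ha
  set b : Fin s → ℂ := fun ℓ => (M ℓ).coeff (Finsupp.single 1 1) with hb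
  have hab : ∀ ℓ, M ℓ = C (a ℓ) * X 0 + C (b ℓ) * X 1 := fun ℓ => homog_one_decomp (hM ℓ)
  have hcore := core hd hrs lam hlam β hβ i0 μ a b
    (heq.trans (Finset.sum_congr rfl fun ℓ _ => by rw [hab ℓ]))
  refine ⟨a, b, hab, ?_⟩
  have hex : ∀ k, ∃ ℓ, a ℓ ≠ 0 ∧ b ℓ / a ℓ = β k := fun k => by
    obtain ⟨ℓ, hℓ⟩ := (hcore k).1
    exact ⟨ℓ, (Finset.mem_filter.mp hℓ).2⟩
  choose τ hτ using hex
  refine ⟨τ, ?_, fun k => ⟨hτ k, (hcore k).2⟩⟩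
  intro k k' h
  apply hβ
  rw [← (hτ k).2, ← (hτ k').2, h]

theorem waring_decomposition_unique (d r : ℕ) (h2r : 2 * r ≤ d + 1)
    (f : MvPolynomial (Fin 2) ℂ) (hf : f.IsHomogeneous d)
    (lam : Fin r → ℂ) (hlam : ∀ k, lam k ≠ 0)
    (β : Fin r → ℂ) (hβ : Function.Injective β)
    (hsum : f = ∑ k, C (lam k) * (linForm (β k)) ^ d) :
    IsLeast {s : ℕ | ∃ (μ : Fin s → ℂ) (M : Fin s → MvPolynomial (Fin 2) ℂ),
        (∀ ℓ, μ ℓ ≠ 0) ∧ (∀ ℓ, (M ℓ).IsHomogeneous 1) ∧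
        f = ∑ ℓ, C (μ ℓ) * (M ℓ) ^ d} r ∧
      ∀ (s : ℕ), s ≤ r → ∀ (μ : Fin s → ℂ) (M : Fin s → MvPolynomial (Fin 2) ℂ),
        (∀ ℓ, μ ℓ ≠ 0) → (∀ ℓ, (M ℓ).IsHomogeneous 1) →
        (∀ ℓ ℓ', ℓ ≠ ℓ' → ∀ t : ℂ, M ℓ ≠ C t * M ℓ') →
        f = ∑ ℓ, C (μ ℓ) * (M ℓ) ^ d →
        s = r ∧ ∃ σ : Fin s ≃ Fin r, ∀ ℓ,
          C (μ ℓ) * (M ℓ) ^ d = C (lam (σ ℓ)) * (linForm (β (σ ℓ))) ^ d := by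
  classical
  have hmem : r ∈ {s : ℕ | ∃ (μ : Fin s → ℂ) (M : Fin s → MvPolynomial (Fin 2) ℂ),
      (∀ ℓ, μ ℓ ≠ 0) ∧ (∀ ℓ, (M ℓ).IsHomogeneous 1) ∧
      f = ∑ ℓ, C (μ ℓ) * (M ℓ) ^ d} :=
    ⟨lam, fun k => linForm (β k), hlam, fun k => linForm_homog _, hsum⟩
  rcases Nat.eq_zero_or_pos r with hr0 | hrpos
  · subst hr0
    refine ⟨⟨hmem, fun s _ => Nat.zero_le s⟩, ?_⟩
    intro s hs μ M hμ hM hprop hfeq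
    have hs0 : s = 0 := Nat.le_zero.mp hs
    subst hs0
    exact ⟨rfl, Equiv.refl _, fun ℓ => ℓ.elim0⟩
  have hd : 1 ≤ d := by omega
  set i0 : Fin r := ⟨0, hrpos⟩ with hi0
  constructor
  · refine ⟨hmem, ?_⟩
    rintro s ⟨μ, M, hμ, hM, hfeq⟩
    by_contra hlt
    push_neg at hlt
    have hrs : r + s ≤ d + 1 := by omega
    obtain ⟨a, b, hab, τ, hτinj, hτ⟩ := core2 hd hrs i0 lam hlam β hβ μ M hM
      (hsum.symm.trans hfeq)
    have hcard := Fintype.card_le_of_injective τ hτinj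
    simp only [Fintype.card_fin] at hcard
    omega
  · intro s hs μ M hμ hM hprop hfeq
    have hrs : r + s ≤ d + 1 := by omega
    obtain ⟨a, b, hab, τ, hτinj, hτ⟩ := core2 hd hrs i0 lam hlam β hβ μ M hM
      (hsum.symm.trans hfeq)
    have hcard := Fintype.card_le_of_injective τ hτinj
    simp only [Fintype.card_fin] at hcard
    have hsr : s = r := le_antisymm hs hcard
    have hbij : Function.Bijective τ := by
      rw [Fintype.bijective_iff_injective_and_card]
      exact ⟨hτinj, by simp [hsr]⟩
    set e : Fin r ≃ Fin s := Equiv.ofBijective τ hbij with he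
    refine ⟨hsr, e.symm, fun ℓ => ?_⟩
    set k : Fin r := e.symm ℓ with hk
    have hτk : τ k = ℓ := e.apply_symm_apply ℓ
    obtain ⟨⟨haτ, hbτ⟩, hsum2⟩ := hτ k
    have hfilter : Finset.univ.filter (fun ℓ' => a ℓ' ≠ 0 ∧ b ℓ' / a ℓ' = β k)
        = {τ k} := by
      apply Finset.eq_singleton_iff_unique_mem.mpr
      refine ⟨Finset.mem_filter.mpr ⟨Finset.mem_univ _, haτ, hbτ⟩, ?_⟩
      intro ℓ' hℓ'
      obtain ⟨-, ha', hb'⟩ := Finset.mem_filter.mp hℓ'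
      by_contra hne
      refine hprop ℓ' (τ k) hne (a ℓ' / a (τ k)) ?_
      rw [hab ℓ', hab (τ k), mul_add, ← mul_assoc, ← mul_assoc, ← C_mul, ← C_mul,
        div_mul_cancel₀ _ haτ]
      have h3 : a ℓ' / a (τ k) * b (τ k) = b ℓ' := by
        have h4 : b (τ k) / a (τ k) = b ℓ' / a ℓ' := by rw [hbτ, hb']
        field_simp at h4 ⊢
        linear_combination h4
      rw [h3]
    rw [hfilter, Finset.sum_singleton] at hsum2
    have hMτ : M (τ k) = C (a (τ k)) * linForm (β k) := by
      have hb2 : a (τ k) * β k = b (τ k) := by rw [← hbτ]; field_simp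
      rw [hab (τ k), linForm, mul_add, ← mul_assoc, ← C_mul, hb2]
    rw [← hτk, hMτ, mul_pow, ← C_pow, ← mul_assoc, ← C_mul, hsum2]
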